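/- Let n ≥ 2, let v_1,…,v_n > 0 and c_1,…,c_n > 0, and let α > 0 be the unique solution of ∑_{i=1}^n [1 − (c_i/v_i)·α]^+ = 1. Then the bid profile x* defined by x_i* = α·[1 − (c_i/v_i)·α]^+ is a Nash equilibrium of the Tullock contest: for every player i and every x_i ≥ 0, U_i(x_i*, x_{−i}*) ≥ U_i(x_i, x_{−i}*). -/

import Mathlib

/-- Utility of player `i` in an `n`-player Tullock contest with valuations `v`
and per-unit costs `c`, given the bid profile `x` (with the convention `0/0 = 0`,
which is Lean's default for division). -/
noncomputable def tullockUtility {n : ℕ} (v c : Fin n → ℝ) (i : Fin n)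
    (x : Fin n → ℝ) : ℝ :=
  v i * (x i / ∑ j, x j) - c i * x i

/-- For `n ≥ 2`, valuations `v i > 0`, costs `c i > 0`, and `α > 0` the unique
solution of `∑ i, [1 - (c i / v i) * α]^+ = 1`, the profile
`x* i = α * [1 - (c i / v i) * α]^+` is a Nash equilibrium of the Tullock
contest: no player can profit by a unilateral deviation to any bid `y ≥ 0`. -/
theorem tullock_nash_equilibrium (n : ℕ) (hn : 2 ≤ n)
    (v c : Fin n → ℝ) (hv : ∀ i, 0 < v i) (hc : ∀ i, 0 < c i)
    (α : ℝ) (hα : 0 < α)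
    (hαeq : ∑ i, max (0 : ℝ) (1 - c i / v i * α) = 1)
    (xstar : Fin n → ℝ)
    (hx : ∀ i, xstar i = α * max (0 : ℝ) (1 - c i / v i * α)) :
    ∀ i : Fin n, ∀ y : ℝ, 0 ≤ y →
      tullockUtility v c i (Function.update xstar i y) ≤
        tullockUtility v c i xstar := by
  intro i y hy
  have hvi := hv i
  have hci := hc i
  -- total bid is α
  have hT : ∑ j, xstar j = α := by
    calc ∑ j, xstar j = ∑ j, α * max (0 : ℝ) (1 - c j / v j * α) := by
          exact Finset.sum_congr rfl fun j _ => hx j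
      _ = α * ∑ j, max (0 : ℝ) (1 - c j / v j * α) := by rw [Finset.mul_sum]
      _ = α := by rw [hαeq, mul_one]
  set x := xstar i with hxdef
  set s := α - x with hsdef
  -- b i < 1 hence s > 0
  have hb1 : max (0 : ℝ) (1 - c i / v i * α) < 1 := by
    have h0 : 0 < c i / v i * α := by positivity
    exact max_lt one_pos (by linarith)
  have hxi : x = α * max (0 : ℝ) (1 - c i / v i * α) := hx i
  have hspos : 0 < s := by
    rw [hsdef, hxi]; nlinarith
  have hD : 0 < y + s := by linarith
  -- sum after update
  have hsum_upd : ∑ j, Function.update xstar i y j = y + s := by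
    rw [Finset.sum_update_of_mem (Finset.mem_univ i)]
    have h := Finset.sum_eq_sum_sdiff_singleton_add (Finset.mem_univ i) xstar
    rw [hT] at h
    have hrest : ∑ j ∈ Finset.univ \ {i}, xstar j = α - x := by linarith
    rw [hrest]
  have hupd_i : Function.update xstar i y i = y := Function.update_self i y xstar
  simp only [tullockUtility, hsum_upd, hupd_i, hT, ← hxdef]
  -- goal : v i * (y / (y + s)) - c i * y ≤ v i * (x / α) - c i * x
  rcases le_or_gt (1 - c i / v i * α) 0 with hcase | hcase
  · -- b i = 0 : x = 0, s = α, and c i * α ≥ v i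
    have hb0 : max (0 : ℝ) (1 - c i / v i * α) = 0 := max_eq_left hcase
    have hx0 : x = 0 := by rw [hxi, hb0, mul_zero]
    have hsα : s = α := by rw [hsdef, hx0, sub_zero]
    have hvc : v i ≤ c i * α := by
      have : c i / v i * α ≥ 1 := by linarith
      rw [div_mul_eq_mul_div, ge_iff_le, le_div_iff₀ hvi] at this
      linarith
    rw [hx0, hsα]
    have h1 : v i * y ≤ c i * y * (y + α) := by
      nlinarith [mul_le_mul_of_nonneg_right hvc hy, mul_nonneg hci.le (mul_self_nonneg y)]
    have h2 : v i * (y / (y + α)) ≤ c i * y := by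
      rw [mul_div_assoc'] at *
      rw [div_le_iff₀ (by linarith : (0:ℝ) < y + α)]
      linarith
    simp only [mul_zero, zero_div, sub_zero]
    linarith
  · -- b i = 1 - c i / v i * α > 0
    have hb : max (0 : ℝ) (1 - c i / v i * α) = 1 - c i / v i * α :=
      max_eq_right hcase.le
    have hxα : v i * (x / α) = v i - c i * α := by
      rw [hxi, hb]
      field_simp
    have hvs : v i * s = c i * α ^ 2 := by
      rw [hsdef, hxi, hb]
      field_simp
      ring
    rw [hxα]
    rw [mul_div_assoc', div_sub' (ne_of_gt hD), div_le_iff₀ hD] at *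
    simp only [hsdef] at hvs ⊢
    nlinarith [mul_nonneg hci.le (sq_nonneg (x - y)), hvs]
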